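/- arXiv:1804.02260 — 3 statements merged into one kernel-verified Lean document; each statement's English description precedes it below -/
import Mathlib

section
/- (Schoenberg's criterion, the converse direction underlying classical MDS.) Let D be a symmetric n × n real matrix with zero diagonal and nonnegative entries, let J = Iₙ − (1/n)𝟙𝟙ᵀ, and suppose G = −½ J D J is positive semidefinite. Then there exist points x₁, …, xₙ ∈ ℝⁿ such that ‖xᵢ − xⱼ‖² = D_{ij} for all i, j; that is, D is realizable as a squared Euclidean distance matrix. -/
open Matrix

/-- Schoenberg's criterion: if D is symmetric with zero diagonal and
nonnegative entries and G = -½ J D J is positive semidefinite, then D is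
realizable as a squared Euclidean distance matrix. -/
theorem schoenberg_realizable
    (n : ℕ) (hn : 1 ≤ n) (D J G : Matrix (Fin n) (Fin n) ℝ)
    (hDsymm : D.IsSymm)
    (hDdiag : ∀ i, D i i = 0)
    (hDnonneg : ∀ i j, 0 ≤ D i j)
    (hJ : J = 1 - (1 / (n : ℝ)) • Matrix.of (fun _ _ => (1 : ℝ)))
    (hG : G = (-(1 / 2) : ℝ) • (J * D * J))
    (hGsymm : G.IsSymm)
    (hGpsd : ∀ v : Fin n → ℝ, 0 ≤ v ⬝ᵥ (G *ᵥ v)) :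
    ∃ x : Fin n → EuclideanSpace ℝ (Fin n), ∀ i j, ‖x i - x j‖ ^ 2 = D i j := by
  set c : ℝ := 1 / (n : ℝ) with hc
  have hJentry : ∀ i j, J i j = (if i = j then (1 : ℝ) else 0) - c := by
    intro i j
    rw [hJ]
    simp [Matrix.sub_apply, Matrix.one_apply]
  have hJD : ∀ i j, (J * D) i j = D i j - c * ∑ k, D k j := by
    intro i j
    rw [Matrix.mul_apply]
    simp only [hJentry, sub_mul, ite_mul, one_mul, zero_mul, Finset.sum_sub_distrib,
      Finset.sum_ite_eq, Finset.mem_univ, if_true, Finset.mul_sum]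
  have hJDJ : ∀ i j, (J * D * J) i j =
      (D i j - c * ∑ l, D l j) - c * ∑ k, (D i k - c * ∑ l, D l k) := by
    intro i j
    rw [Matrix.mul_apply]
    simp only [hJD, hJentry, mul_sub, mul_ite, mul_one, mul_zero]
    rw [Finset.sum_sub_distrib, Finset.sum_ite_eq' Finset.univ j]
    simp only [Finset.mem_univ, if_true, mul_sub, sub_mul, Finset.sum_sub_distrib,
      Finset.sum_mul, Finset.mul_sum]
    ring_nf
  have hGentry : ∀ i j, G i j =
      (-(1/2)) * (D i j - c * (∑ l, D l j) - c * (∑ k, D i k)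
        + c * c * (∑ k, ∑ l, D l k)) := by
    intro i j
    rw [hG, Matrix.smul_apply, hJDJ, smul_eq_mul, Finset.sum_sub_distrib, ← Finset.mul_sum]
    ring
  have hrowcol : ∀ i : Fin n, ∑ k, D k i = ∑ k, D i k := by
    intro i
    exact Finset.sum_congr rfl fun k _ => hDsymm.apply i k
  have key : ∀ i j, G i i + G j j - 2 * G i j = D i j := by
    intro i j
    rw [hGentry, hGentry, hGentry, hDdiag, hDdiag, hrowcol i, hrowcol j]
    ring
  have hGherm : G.IsHermitian := by
    rw [Matrix.IsHermitian]
    ext i j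
    rw [Matrix.conjTranspose_apply, star_trivial]
    exact hGsymm.apply i j
  have hGpsd' : G.PosSemidef := by
    refine Matrix.PosSemidef.of_dotProduct_mulVec_nonneg hGherm fun v => ?_
    simpa using hGpsd v
  open scoped MatrixOrder Matrix.Norms.L2Operator in
  obtain ⟨B, hB⟩ := CStarAlgebra.nonneg_iff_eq_star_mul_self.mp hGpsd'.nonneg
  have hGB : ∀ i j, G i j = ∑ k, B k i * B k j := by
    intro i j
    rw [hB]
    simp [Matrix.mul_apply, Matrix.conjTranspose_apply]
  refine ⟨fun i => (WithLp.equiv 2 (Fin n → ℝ)).symm (fun k => B k i), fun i j => ?_⟩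
  have hnorm : ‖(WithLp.equiv 2 (Fin n → ℝ)).symm (fun k => B k i) -
      (WithLp.equiv 2 (Fin n → ℝ)).symm (fun k => B k j)‖ ^ 2
        = ∑ k, (B k i - B k j) ^ 2 := by
    rw [EuclideanSpace.norm_eq, Real.sq_sqrt (by positivity)]
    refine Finset.sum_congr rfl fun k _ => ?_
    rw [Real.norm_eq_abs, sq_abs]
    rfl
  rw [hnorm, ← key i j, hGB, hGB, hGB, ← Finset.sum_add_distrib, Finset.mul_sum,
    ← Finset.sum_sub_distrib]
  refine Finset.sum_congr rfl fun k _ => ?_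
  ring
end

section
/- (Exactness of the classical MDS embedding.) Let D be a symmetric n × n real matrix with zero diagonal, let J = Iₙ − (1/n)𝟙𝟙ᵀ, and suppose G = −½ J D J is positive semidefinite with eigenvalues λ₁ ≥ λ₂ ≥ … ≥ λₙ ≥ 0 and a corresponding orthonormal basis of eigenvectors u₁, …, uₙ. If G has rank at most m, then the points x₁, …, xₙ ∈ ℝᵐ defined coordinatewise by (xᵢ)ₖ = √λₖ · uₖ(i), for k = 1, …, m, satisfy ‖xᵢ − xⱼ‖² = D_{ij} for all i, j. In other words, the eigen-decomposition solution x*ᵢ = (√λ₁ u₁(i), …, √λₘ uₘ(i)) of classical MDS exactly reproduces the distance matrix whenever G has rank at most m. -/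
open Matrix

/-- Exactness of the classical MDS embedding: if G = -½ J D J is positive
semidefinite with rank at most m, then the eigen-decomposition configuration
(xᵢ)ₖ = √λₖ · uₖ(i) exactly reproduces D as a squared-distance matrix. -/
theorem classical_mds_exact
    (n m : ℕ) (hn : 1 ≤ n) (hmn : m ≤ n)
    (D J G : Matrix (Fin n) (Fin n) ℝ)
    (hDsymm : D.IsSymm)
    (hDdiag : ∀ i, D i i = 0)
    (hJ : J = 1 - (1 / (n : ℝ)) • Matrix.of (fun _ _ => (1 : ℝ)))
    (hG : G = (-(1 / 2) : ℝ) • (J * D * J))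
    (hGsymm : G.IsSymm)
    (hGpsd : ∀ v : Fin n → ℝ, 0 ≤ v ⬝ᵥ (G *ᵥ v))
    (lam : Fin n → ℝ) (u : Fin n → (Fin n → ℝ))
    (hdecr : ∀ k l : Fin n, k ≤ l → lam l ≤ lam k)
    (hnonneg : ∀ k, 0 ≤ lam k)
    (heig : ∀ k, G *ᵥ u k = lam k • u k)
    (horth : ∀ k l, u k ⬝ᵥ u l = if k = l then 1 else 0)
    (hrank : G.rank ≤ m)
    (x : Fin n → EuclideanSpace ℝ (Fin m))
    (hx : ∀ i : Fin n, ∀ k : Fin m,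
      x i k = Real.sqrt (lam (Fin.castLE hmn k)) * u (Fin.castLE hmn k) i) :
    ∀ i j, ‖x i - x j‖ ^ 2 = D i j := by
  classical
  -- The matrix whose rows are the eigenvectors
  set U : Matrix (Fin n) (Fin n) ℝ := Matrix.of (fun k i => u k i) with hU
  have hUUT : U * Uᵀ = 1 := by
    ext k l
    simpa [Matrix.mul_apply, Matrix.one_apply, dotProduct, hU] using horth k l
  have hUTU : Uᵀ * U = 1 := mul_eq_one_comm.mp hUUT
  -- spectral formula for G entries
  have hGU : ∀ i k, (G * Uᵀ) i k = lam k * u k i := by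
    intro i k
    have h := congrFun (heig k) i
    simp only [Matrix.mulVec, dotProduct, Pi.smul_apply, smul_eq_mul] at h
    simpa [Matrix.mul_apply, hU] using h
  have hGspec : ∀ i j, G i j = ∑ k, lam k * u k i * u k j := by
    intro i j
    have h1 : (G * Uᵀ) * U = G := by rw [Matrix.mul_assoc, hUTU, mul_one]
    have h2 := congrFun (congrFun h1 i) j
    rw [Matrix.mul_apply] at h2
    simp only [hGU] at h2
    rw [← h2]
    exact Finset.sum_congr rfl fun k _ => rfl
  -- eigenvalues beyond rank are zero
  have hlamzero : ∀ k : Fin n, m ≤ (k : ℕ) → lam k = 0 := by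
    intro k hk
    by_contra hne
    have hpos : 0 < lam k := lt_of_le_of_ne (hnonneg k) (Ne.symm hne)
    set e : Fin ((k : ℕ) + 1) → Fin n :=
      fun j => ⟨(j : ℕ), lt_of_le_of_lt (Nat.lt_succ_iff.mp j.isLt) k.isLt⟩ with he
    have heinj : Function.Injective e := by
      intro a b hab
      simp only [he, Fin.mk.injEq] at hab
      exact Fin.ext hab
    have hle : ∀ j, e j ≤ k := fun j => Nat.lt_succ_iff.mp j.isLt
    have hlampos : ∀ j, 0 < lam (e j) := fun j => lt_of_lt_of_le hpos (hdecr (e j) k (hle j))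
    have hmem : ∀ j, u (e j) ∈ LinearMap.range G.mulVecLin := by
      intro j
      refine ⟨(lam (e j))⁻¹ • u (e j), ?_⟩
      simp [Matrix.mulVecLin_apply, Matrix.mulVec_smul, heig, smul_smul,
        inv_mul_cancel₀ (ne_of_gt (hlampos j))]
    set w : Fin ((k : ℕ) + 1) → LinearMap.range G.mulVecLin := fun j => ⟨u (e j), hmem j⟩ with hw
    have hind : LinearIndependent ℝ w := by
      apply LinearIndependent.of_comp (LinearMap.range G.mulVecLin).subtype
      rw [linearIndependent_iff']
      intro s g hsum j hj
      have h2 := congrArg (fun v => v ⬝ᵥ u (e j)) hsum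
      simp only [Function.comp, hw, Submodule.coe_subtype] at h2
      have hkey : (∑ x ∈ s, g x • u (e x)) ⬝ᵥ u (e j)
          = ∑ x ∈ s, g x * (u (e x) ⬝ᵥ u (e j)) := by
        simp only [dotProduct, Finset.sum_apply, Pi.smul_apply, smul_eq_mul,
          Finset.sum_mul, Finset.mul_sum, mul_assoc]
        exact Finset.sum_comm
      rw [hkey] at h2
      simp only [horth, zero_dotProduct] at h2
      simp only [heinj.eq_iff, mul_ite, mul_one, mul_zero] at h2
      rw [Finset.sum_ite_eq' s j g, if_pos hj] at h2
      exact h2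
    have hcard := hind.fintype_card_le_finrank
    rw [Fintype.card_fin] at hcard
    have : G.rank = Module.finrank ℝ (LinearMap.range G.mulVecLin) := rfl
    omega
  intro i j
  -- squared norm as a sum
  have hnorm : ‖x i - x j‖ ^ 2 = ∑ k : Fin m, (x i k - x j k) ^ 2 := by
    have h1 : ‖x i - x j‖ = Real.sqrt (∑ k : Fin m, (x i k - x j k) ^ 2) := by
      rw [EuclideanSpace.norm_eq]
      congr 1
      refine Finset.sum_congr rfl fun k _ => ?_
      rw [show (x i - x j) k = x i k - x j k from rfl, Real.norm_eq_abs, sq_abs]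
    rw [h1, Real.sq_sqrt (Finset.sum_nonneg fun k _ => sq_nonneg _)]
  have hterm : ∀ k : Fin m, (x i k - x j k) ^ 2 =
      lam (Fin.castLE hmn k) * (u (Fin.castLE hmn k) i - u (Fin.castLE hmn k) j) ^ 2 := by
    intro k
    rw [hx i k, hx j k, ← mul_sub, mul_pow, Real.sq_sqrt (hnonneg _)]
  have hext : ∑ k : Fin m, lam (Fin.castLE hmn k) * (u (Fin.castLE hmn k) i - u (Fin.castLE hmn k) j) ^ 2
      = ∑ k : Fin n, lam k * (u k i - u k j) ^ 2 := by
    have h0 : ∀ k : Fin n, k ∈ Finset.univ →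
        k ∉ Finset.univ.map (Fin.castLEEmb hmn) → lam k * (u k i - u k j) ^ 2 = 0 := by
      intro k _ hk
      have hmk : m ≤ (k : ℕ) := by
        by_contra h
        push_neg at h
        exact hk (Finset.mem_map.mpr ⟨⟨(k : ℕ), h⟩, Finset.mem_univ _, Fin.ext rfl⟩)
      rw [hlamzero k hmk, zero_mul]
    rw [← Finset.sum_subset (Finset.subset_univ _) h0, Finset.sum_map]
    rfl
  have hGsum : ∑ k : Fin n, lam k * (u k i - u k j) ^ 2 = G i i + G j j - 2 * G i j := by
    rw [hGspec i i, hGspec j j, hGspec i j, Finset.mul_sum, ← Finset.sum_add_distrib,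
      ← Finset.sum_sub_distrib]
    exact Finset.sum_congr rfl fun k _ => by ring
  -- entrywise formula for G
  have hJapp : ∀ a b : Fin n, J a b = (if a = b then (1 : ℝ) else 0) - 1 / (n : ℝ) := by
    intro a b
    rw [hJ]
    simp [Matrix.one_apply]
  have hDJ : ∀ a b, (D * J) a b = D a b - (1 / (n : ℝ)) * ∑ l, D a l := by
    intro a b
    rw [Matrix.mul_apply]
    have hterm : ∀ l, D a l * J l b
        = (if l = b then D a l else 0) - (1 / (n : ℝ)) * D a l := by
      intro l
      rw [hJapp]
      by_cases h : l = b <;> simp [h] <;> ring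
    rw [Finset.sum_congr rfl fun l _ => hterm l, Finset.sum_sub_distrib,
      Finset.sum_ite_eq' Finset.univ b (fun l => D a l), if_pos (Finset.mem_univ b),
      ← Finset.mul_sum]
  have hJDJ : ∀ a b, (J * (D * J)) a b =
      (D * J) a b - (1 / (n : ℝ)) * ∑ t, (D * J) t b := by
    intro a b
    rw [Matrix.mul_apply]
    have hterm : ∀ t, J a t * (D * J) t b
        = (if a = t then (D * J) t b else 0) - (1 / (n : ℝ)) * (D * J) t b := by
      intro t
      rw [hJapp]
      by_cases h : a = t <;> simp [h] <;> ring
    rw [Finset.sum_congr rfl fun t _ => hterm t, Finset.sum_sub_distrib,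
      Finset.sum_ite_eq Finset.univ a (fun t => (D * J) t b), if_pos (Finset.mem_univ a),
      ← Finset.mul_sum]
  have hcol : ∀ b : Fin n, ∑ t, D t b = ∑ t, D b t :=
    fun b => Finset.sum_congr rfl fun t _ => hDsymm.apply b t
  have hGent : ∀ a b, G a b = -(1 / 2) * (D a b - (1 / (n : ℝ)) * ∑ l, D a l
      - (1 / (n : ℝ)) * ∑ l, D b l
      + (1 / (n : ℝ)) * ((1 / (n : ℝ)) * ∑ t, ∑ l, D t l)) := by
    intro a b
    have h1 : G a b = -(1 / 2) * (J * (D * J)) a b := by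
      rw [hG, ← Matrix.mul_assoc]
      simp
    rw [h1, hJDJ, hDJ]
    have h2 : ∑ t, (D * J) t b = (∑ l, D b l) - (1 / (n : ℝ)) * ∑ t, ∑ l, D t l := by
      rw [show ∑ t, (D * J) t b = ∑ t, (D t b - (1 / (n : ℝ)) * ∑ l, D t l) from
        Finset.sum_congr rfl fun t _ => hDJ t b]
      rw [Finset.sum_sub_distrib, hcol, ← Finset.mul_sum]
    rw [h2]
    ring
  have hfinal : G i i + G j j - 2 * G i j = D i j := by
    rw [hGent i i, hGent j j, hGent i j, hDdiag i, hDdiag j]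
    ring
  rw [hnorm]
  rw [Finset.sum_congr rfl fun k _ => hterm k, hext, hGsum, hfinal]
end

section
/- (Optimality of the classical MDS eigen-solution; Eckart–Young for positive-semidefinite Gram approximation.) Let G be a symmetric positive-semidefinite n × n real matrix with eigenvalues λ₁ ≥ λ₂ ≥ … ≥ λₙ ≥ 0 and orthonormal eigenvectors u₁, …, uₙ, and let 1 ≤ m ≤ n. Let X* be the n × m matrix whose k-th column is √λₖ uₖ. Then for every n × m real matrix X, ‖G − X Xᵀ‖_F ≥ ‖G − X* (X*)ᵀ‖_F, and ‖G − X* (X*)ᵀ‖_F² = ∑_{k=m+1}^{n} λₖ². That is, the classical MDS configuration x*ᵢ = (√λ₁ u₁(i), …, √λₘ uₘ(i)) minimizes the strain ‖G − X Xᵀ‖_F over all m-dimensional configurations. -/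
open Matrix

/-- The Frobenius norm of a real matrix. -/
noncomputable def frobNorm {n m : ℕ} (A : Matrix (Fin n) (Fin m) ℝ) : ℝ :=
  Real.sqrt (∑ i, ∑ j, (A i j) ^ 2)

private lemma pilp_sum_apply' {n r : ℕ} (f : Fin r → EuclideanSpace ℝ (Fin n)) (i : Fin n) :
    (∑ t, f t) i = ∑ t, f t i := by rw [WithLp.ofLp_sum, Finset.sum_apply]

/-- Orthonormal spanning family for the column space of a matrix. -/
private lemma exists_onb_cols {n m : ℕ} (X : Matrix (Fin n) (Fin m) ℝ) :
    ∃ (r : ℕ) (v : Fin r → Fin n → ℝ), r ≤ m ∧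
      (∀ s t, ∑ i, v s i * v t i = if s = t then (1:ℝ) else 0) ∧
      (∀ p : Fin m, ∃ c : Fin r → ℝ, ∀ i, X i p = ∑ t, c t * v t i) := by
  classical
  set E := EuclideanSpace ℝ (Fin n)
  set xcol : Fin m → E := fun p => WithLp.toLp 2 (fun i => X i p : Fin n → ℝ) with hxcol
  set V : Submodule ℝ E := Submodule.span ℝ (Set.range xcol) with hV
  set r : ℕ := Module.finrank ℝ V with hrr
  have hr : r ≤ m := by
    have := finrank_range_le_card (R := ℝ) xcol
    rw [Fintype.card_fin] at this
    exact this
  set b := stdOrthonormalBasis ℝ V with hb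
  refine ⟨r, fun t => ((b t : E) : Fin n → ℝ), hr, ?_, ?_⟩
  · intro s t
    have h := b.orthonormal
    rw [orthonormal_iff_ite] at h
    have h2 := h s t
    rw [Submodule.coe_inner] at h2
    rw [PiLp.inner_apply] at h2
    simp only [RCLike.inner_apply, conj_trivial] at h2
    rw [← h2]
    exact Finset.sum_congr rfl fun i _ => by ring
  · intro p
    have hmem : xcol p ∈ V := Submodule.subset_span (Set.mem_range_self p)
    have hrepr := b.sum_repr ⟨xcol p, hmem⟩
    refine ⟨fun t => b.repr ⟨xcol p, hmem⟩ t, fun i => ?_⟩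
    have : (xcol p : E) = ∑ t, (b.repr ⟨xcol p, hmem⟩ t : ℝ) • ((b t : E)) := by
      calc (xcol p : E) = ((⟨xcol p, hmem⟩ : V) : E) := rfl
        _ = ((∑ t, b.repr ⟨xcol p, hmem⟩ t • b t : V) : E) := by rw [hrepr]
        _ = _ := by push_cast; rfl
    have happ := congrFun (congrArg (fun (z : E) => (z : Fin n → ℝ)) this) i
    simp only [hxcol] at happ
    rw [happ, pilp_sum_apply']
    rfl

private lemma completeness {n : ℕ} (u : Fin n → Fin n → ℝ)
    (horth : ∀ k l, u k ⬝ᵥ u l = if k = l then (1:ℝ) else 0) (i j : Fin n) :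
    ∑ k, u k i * u k j = if i = j then (1:ℝ) else 0 := by
  have h1 : (Matrix.of u) * (Matrix.of u)ᵀ = 1 := by
    ext k l
    simpa [Matrix.mul_apply, Matrix.one_apply, dotProduct] using horth k l
  have h2 : (Matrix.of u)ᵀ * (Matrix.of u) = 1 := mul_eq_one_comm.mp h1
  have := congrFun (congrFun h2 i) j
  simpa [Matrix.mul_apply, Matrix.one_apply] using this

private lemma parseval_aux {n : ℕ} (u : Fin n → Fin n → ℝ)
    (hcomp : ∀ i j, ∑ k, u k i * u k j = if i = j then (1:ℝ) else 0)
    (w : Fin n → ℝ) :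
    ∑ k, (∑ i, w i * u k i)^2 = ∑ i, (w i)^2 := by
  have step : ∀ k, (∑ i, w i * u k i)^2 = ∑ i, ∑ j, (w i * w j) * (u k i * u k j) := by
    intro k
    rw [sq, Finset.sum_mul_sum]
    exact Finset.sum_congr rfl fun i _ => Finset.sum_congr rfl fun j _ => by ring
  calc ∑ k, (∑ i, w i * u k i)^2
      = ∑ k, ∑ i, ∑ j, (w i * w j) * (u k i * u k j) := Finset.sum_congr rfl fun k _ => step k
    _ = ∑ i, ∑ j, ∑ k, (w i * w j) * (u k i * u k j) := by
        rw [Finset.sum_comm]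
        exact Finset.sum_congr rfl fun i _ => Finset.sum_comm
    _ = ∑ i, ∑ j, (w i * w j) * ∑ k, u k i * u k j := by
        exact Finset.sum_congr rfl fun i _ => Finset.sum_congr rfl fun j _ =>
          (Finset.mul_sum _ _ _).symm
    _ = ∑ i, (w i)^2 := by
        simp [hcomp, Finset.sum_ite_eq', sq]

private lemma sum_sq_combo {n r : ℕ} (v : Fin r → Fin n → ℝ)
    (hv : ∀ s t, ∑ i, v s i * v t i = if s = t then (1:ℝ) else 0) (e : Fin r → ℝ) :
    ∑ i, (∑ t, e t * v t i)^2 = ∑ t, (e t)^2 := by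
  have step : ∀ i, (∑ t, e t * v t i)^2 = ∑ t, ∑ s, (e t * e s) * (v t i * v s i) := by
    intro i
    rw [sq, Finset.sum_mul_sum]
    exact Finset.sum_congr rfl fun t _ => Finset.sum_congr rfl fun s _ => by ring
  calc ∑ i, (∑ t, e t * v t i)^2
      = ∑ i, ∑ t, ∑ s, (e t * e s) * (v t i * v s i) := Finset.sum_congr rfl fun i _ => step i
    _ = ∑ t, ∑ s, ∑ i, (e t * e s) * (v t i * v s i) := by
        rw [Finset.sum_comm]
        exact Finset.sum_congr rfl fun t _ => Finset.sum_comm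
    _ = ∑ t, ∑ s, (e t * e s) * ∑ i, v t i * v s i :=
        Finset.sum_congr rfl fun t _ => Finset.sum_congr rfl fun s _ =>
          (Finset.mul_sum _ _ _).symm
    _ = ∑ t, (e t)^2 := by simp [hv, Finset.sum_ite_eq', sq]

private lemma cross_sum {n r : ℕ} (v : Fin r → Fin n → ℝ) (a : Fin n → ℝ) (e : Fin r → ℝ) :
    ∑ i, a i * (∑ t, e t * v t i) = ∑ t, e t * (∑ i, v t i * a i) := by
  calc ∑ i, a i * (∑ t, e t * v t i)
      = ∑ i, ∑ t, e t * (v t i * a i) := by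
        refine Finset.sum_congr rfl fun i _ => ?_
        rw [Finset.mul_sum]
        exact Finset.sum_congr rfl fun t _ => by ring
    _ = ∑ t, ∑ i, e t * (v t i * a i) := Finset.sum_comm
    _ = ∑ t, e t * (∑ i, v t i * a i) :=
        Finset.sum_congr rfl fun t _ => (Finset.mul_sum _ _ _).symm

private lemma dist_identity {n r : ℕ} (v : Fin r → Fin n → ℝ)
    (hv : ∀ s t, ∑ i, v s i * v t i = if s = t then (1:ℝ) else 0)
    (a : Fin n → ℝ) (e : Fin r → ℝ) :
    ∑ i, (a i - ∑ t, e t * v t i)^2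
      = ∑ i, (a i)^2 - 2 * ∑ t, e t * (∑ i, v t i * a i) + ∑ t, (e t)^2 := by
  have expand : ∀ i, (a i - ∑ t, e t * v t i)^2
      = (a i)^2 - 2 * (a i * ∑ t, e t * v t i) + (∑ t, e t * v t i)^2 := fun i => by ring
  rw [Finset.sum_congr rfl fun i _ => expand i]
  rw [Finset.sum_add_distrib, Finset.sum_sub_distrib, ← Finset.mul_sum,
    cross_sum v a e, sum_sq_combo v hv e]

private lemma dist_bound {n r : ℕ} (v : Fin r → Fin n → ℝ)
    (hv : ∀ s t, ∑ i, v s i * v t i = if s = t then (1:ℝ) else 0)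
    (a : Fin n → ℝ) (e : Fin r → ℝ) :
    ∑ i, (a i)^2 - ∑ t, (∑ i, v t i * a i)^2
      ≤ ∑ i, (a i - ∑ t, e t * v t i)^2 := by
  rw [dist_identity v hv a e]
  have key : ∑ t, (e t - ∑ i, v t i * a i)^2
      = ∑ t, (e t)^2 - 2 * ∑ t, e t * (∑ i, v t i * a i) + ∑ t, (∑ i, v t i * a i)^2 := by
    have expand : ∀ t, (e t - ∑ i, v t i * a i)^2
        = (e t)^2 - 2 * (e t * ∑ i, v t i * a i) + (∑ i, v t i * a i)^2 := fun t => by ring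
    rw [Finset.sum_congr rfl fun t _ => expand t,
      Finset.sum_add_distrib, Finset.sum_sub_distrib, ← Finset.mul_sum]
  have pos : (0:ℝ) ≤ ∑ t, (e t - ∑ i, v t i * a i)^2 :=
    Finset.sum_nonneg fun t _ => sq_nonneg _
  linarith

private lemma bessel {n r : ℕ} (v : Fin r → Fin n → ℝ)
    (hv : ∀ s t, ∑ i, v s i * v t i = if s = t then (1:ℝ) else 0)
    (a : Fin n → ℝ) :
    ∑ t, (∑ i, v t i * a i)^2 ≤ ∑ i, (a i)^2 := by
  have hid := dist_identity v hv a (fun t => ∑ i, v t i * a i)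
  have hsq : ∑ t, (∑ i, v t i * a i) * (∑ i, v t i * a i)
      = ∑ t, (∑ i, v t i * a i)^2 := by
    exact Finset.sum_congr rfl fun t _ => (sq _).symm
  rw [hsq] at hid
  have pos : (0:ℝ) ≤ ∑ i, (a i - ∑ t, (∑ i', v t i' * a i') * v t i)^2 :=
    Finset.sum_nonneg fun i _ => sq_nonneg _
  linarith

private lemma filter_lt_eq_map {n m : ℕ} (hmn : m ≤ n) :
    Finset.univ.filter (fun k : Fin n => (k : ℕ) < m)
      = Finset.univ.map ⟨Fin.castLE hmn, Fin.castLE_injective hmn⟩ := by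
  ext k
  simp only [Finset.mem_filter, Finset.mem_univ, true_and, Finset.mem_map,
    Function.Embedding.coeFn_mk]
  constructor
  · intro h
    exact ⟨⟨(k : ℕ), h⟩, by ext; simp⟩
  · rintro ⟨j, rfl⟩
    exact j.isLt

private lemma card_filter_lt {n m : ℕ} (hmn : m ≤ n) :
    (Finset.univ.filter (fun k : Fin n => (k : ℕ) < m)).card = m := by
  rw [filter_lt_eq_map hmn, Finset.card_map, Finset.card_univ, Fintype.card_fin]

private lemma knapsack {n m : ℕ} (hmn : m ≤ n) (μ c : Fin n → ℝ)
    (hμdecr : ∀ k l : Fin n, k ≤ l → μ l ≤ μ k) (hμ0 : ∀ k, 0 ≤ μ k)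
    (hc0 : ∀ k, 0 ≤ c k) (hc1 : ∀ k, c k ≤ 1) (hcs : ∑ k, c k ≤ (m:ℝ)) :
    ∑ k ∈ Finset.univ.filter (fun k : Fin n => m ≤ (k : ℕ)), μ k
      ≤ ∑ k, μ k * (1 - c k) := by
  classical
  have hsplit := Finset.sum_filter_add_sum_filter_not (Finset.univ : Finset (Fin n))
    (fun k : Fin n => (k : ℕ) < m) (fun k => μ k * (1 - c k))
  have hsplitc := Finset.sum_filter_add_sum_filter_not (Finset.univ : Finset (Fin n))
    (fun k : Fin n => (k : ℕ) < m) c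
  set A := Finset.univ.filter (fun k : Fin n => (k : ℕ) < m) with hA
  set B := Finset.univ.filter (fun k : Fin n => ¬ (k : ℕ) < m) with hB
  have hBeq : Finset.univ.filter (fun k : Fin n => m ≤ (k : ℕ)) = B := by
    simp [hB, not_lt]
  rw [hBeq]
  rcases Nat.eq_or_lt_of_le hmn with heq | hlt
  · have hBempty : B = ∅ := by
      subst heq
      simp [hB, Fin.is_lt]
    rw [hBempty]
    simp only [Finset.sum_empty]
    exact Finset.sum_nonneg fun k _ => mul_nonneg (hμ0 k) (by linarith [hc1 k])
  · set M : Fin n := ⟨m, hlt⟩ with hM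
    have h1 : ∑ k ∈ B, μ k * c k ≤ μ M * ∑ k ∈ B, c k := by
      rw [Finset.mul_sum]
      refine Finset.sum_le_sum fun k hk => ?_
      have hkB : m ≤ (k : ℕ) := by
        simp [hB, not_lt] at hk; exact hk
      have : μ k ≤ μ M := hμdecr M k (by simp [hM, Fin.le_def]; exact hkB)
      exact mul_le_mul_of_nonneg_right this (hc0 k)
    have h2 : ∑ k ∈ B, c k ≤ (m:ℝ) - ∑ k ∈ A, c k := by linarith
    have h3 : (m:ℝ) - ∑ k ∈ A, c k = ∑ k ∈ A, (1 - c k) := by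
      rw [Finset.sum_sub_distrib, Finset.sum_const, card_filter_lt hmn]
      simp
    have h4 : μ M * ∑ k ∈ B, c k ≤ μ M * ∑ k ∈ A, (1 - c k) := by
      rw [← h3]
      exact mul_le_mul_of_nonneg_left h2 (hμ0 M)
    have h5 : μ M * ∑ k ∈ A, (1 - c k) ≤ ∑ k ∈ A, μ k * (1 - c k) := by
      rw [Finset.mul_sum]
      refine Finset.sum_le_sum fun k hk => ?_
      have hkA : (k : ℕ) < m := by simp [hA] at hk; exact hk
      have hμk : μ M ≤ μ k := hμdecr k M (by simp [hM, Fin.le_def]; omega)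
      exact mul_le_mul_of_nonneg_right hμk (by linarith [hc1 k])
    have h6 : ∑ k ∈ B, μ k * c k ≤ ∑ k ∈ A, μ k * (1 - c k) := by linarith
    have h7 : ∑ k ∈ B, μ k = ∑ k ∈ B, μ k * (1 - c k) + ∑ k ∈ B, μ k * c k := by
      rw [← Finset.sum_add_distrib]
      exact Finset.sum_congr rfl fun k _ => by ring
    linarith

private lemma sq_sum_filter {n : ℕ} (S : Finset (Fin n)) (u : Fin n → Fin n → ℝ)
    (horth' : ∀ k l, (∑ j, u k j * u l j) = if k = l then (1:ℝ) else 0)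
    (d : Fin n → ℝ) :
    ∑ j, (∑ k ∈ S, d k * u k j)^2 = ∑ k ∈ S, (d k)^2 := by
  have step : ∀ j, (∑ k ∈ S, d k * u k j)^2
      = ∑ k ∈ S, ∑ l ∈ S, (d k * d l) * (u k j * u l j) := by
    intro j
    rw [sq, Finset.sum_mul_sum]
    exact Finset.sum_congr rfl fun k _ => Finset.sum_congr rfl fun l _ => by ring
  calc ∑ j, (∑ k ∈ S, d k * u k j)^2
      = ∑ j, ∑ k ∈ S, ∑ l ∈ S, (d k * d l) * (u k j * u l j) :=
        Finset.sum_congr rfl fun j _ => step j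
    _ = ∑ k ∈ S, ∑ l ∈ S, ∑ j, (d k * d l) * (u k j * u l j) := by
        rw [Finset.sum_comm]
        exact Finset.sum_congr rfl fun k _ => Finset.sum_comm
    _ = ∑ k ∈ S, ∑ l ∈ S, (d k * d l) * ∑ j, u k j * u l j :=
        Finset.sum_congr rfl fun k _ => Finset.sum_congr rfl fun l _ =>
          (Finset.mul_sum _ _ _).symm
    _ = ∑ k ∈ S, (d k)^2 := by
        refine Finset.sum_congr rfl fun k hk => ?_
        rw [Finset.sum_eq_single k]
        · rw [horth' k k]; simp [sq]
        · intro l _ hlk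
          rw [horth' k l, if_neg (fun h => hlk h.symm), mul_zero]
        · intro h; exact absurd hk h

/-- Eckart–Young optimality of the classical MDS eigen-solution: the
configuration X* with k-th column √λₖ uₖ minimizes the strain ‖G - X Xᵀ‖_F
over all n × m configurations X, and the optimal squared error is the sum of
the squares of the discarded eigenvalues. -/
theorem classical_mds_optimal
    (n m : ℕ) (hm : 1 ≤ m) (hmn : m ≤ n)
    (G : Matrix (Fin n) (Fin n) ℝ)
    (hGsymm : G.IsSymm)
    (hGpsd : ∀ v : Fin n → ℝ, 0 ≤ v ⬝ᵥ (G *ᵥ v))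
    (lam : Fin n → ℝ) (u : Fin n → (Fin n → ℝ))
    (hdecr : ∀ k l : Fin n, k ≤ l → lam l ≤ lam k)
    (hnonneg : ∀ k, 0 ≤ lam k)
    (heig : ∀ k, G *ᵥ u k = lam k • u k)
    (horth : ∀ k l, u k ⬝ᵥ u l = if k = l then 1 else 0)
    (Xstar : Matrix (Fin n) (Fin m) ℝ)
    (hXstar : ∀ i : Fin n, ∀ k : Fin m,
      Xstar i k = Real.sqrt (lam (Fin.castLE hmn k)) * u (Fin.castLE hmn k) i) :
    (∀ X : Matrix (Fin n) (Fin m) ℝ,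
        frobNorm (G - Xstar * Xstarᵀ) ≤ frobNorm (G - X * Xᵀ)) ∧
      frobNorm (G - Xstar * Xstarᵀ) ^ 2 =
        ∑ k ∈ Finset.univ.filter (fun k : Fin n => m ≤ (k : ℕ)), (lam k) ^ 2 := by
  classical
  have horth' : ∀ k l, (∑ j, u k j * u l j) = if k = l then (1:ℝ) else 0 := by
    intro k l; simpa [dotProduct] using horth k l
  have hcomp := completeness u horth'
  -- eigen-equation entrywise
  have hGiv : ∀ k i, (∑ l, G i l * u k l) = lam k * u k i := by
    intro k i
    have := congrFun (heig k) i
    simpa [Matrix.mulVec, dotProduct] using this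
  -- spectral decomposition
  have hGspec : ∀ i j, G i j = ∑ k, lam k * (u k i * u k j) := by
    intro i j
    calc G i j = ∑ l, G i l * (if l = j then (1:ℝ) else 0) := by simp
      _ = ∑ l, G i l * ∑ k, u k l * u k j :=
          Finset.sum_congr rfl fun l _ => by rw [hcomp l j]
      _ = ∑ l, ∑ k, (G i l * u k l) * u k j := by
          refine Finset.sum_congr rfl fun l _ => ?_
          rw [Finset.mul_sum]
          exact Finset.sum_congr rfl fun k _ => by ring
      _ = ∑ k, ∑ l, (G i l * u k l) * u k j := Finset.sum_comm
      _ = ∑ k, lam k * (u k i * u k j) := by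
          refine Finset.sum_congr rfl fun k _ => ?_
          rw [← Finset.sum_mul, hGiv k i]; ring
  -- the Xstar Gram matrix
  have hXprod : ∀ i j, (Xstar * Xstarᵀ) i j
      = ∑ k ∈ Finset.univ.filter (fun k : Fin n => (k:ℕ) < m), lam k * (u k i * u k j) := by
    intro i j
    rw [filter_lt_eq_map hmn, Finset.sum_map]
    simp only [Function.Embedding.coeFn_mk]
    rw [Matrix.mul_apply]
    refine Finset.sum_congr rfl fun p _ => ?_
    rw [Matrix.transpose_apply, hXstar i p, hXstar j p]
    have hps := Real.mul_self_sqrt (hnonneg (Fin.castLE hmn p))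
    calc Real.sqrt (lam (Fin.castLE hmn p)) * u (Fin.castLE hmn p) i *
          (Real.sqrt (lam (Fin.castLE hmn p)) * u (Fin.castLE hmn p) j)
        = (Real.sqrt (lam (Fin.castLE hmn p)) * Real.sqrt (lam (Fin.castLE hmn p)))
            * (u (Fin.castLE hmn p) i * u (Fin.castLE hmn p) j) := by ring
      _ = lam (Fin.castLE hmn p) * (u (Fin.castLE hmn p) i * u (Fin.castLE hmn p) j) := by
          rw [hps]
  -- the residual
  have hdiffS : ∀ i j, (G - Xstar * Xstarᵀ) i j
      = ∑ k ∈ Finset.univ.filter (fun k : Fin n => m ≤ (k:ℕ)), lam k * (u k i * u k j) := by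
    intro i j
    have hsplit := Finset.sum_filter_add_sum_filter_not (Finset.univ : Finset (Fin n))
      (fun k : Fin n => (k : ℕ) < m) (fun k => lam k * (u k i * u k j))
    have hfe : Finset.univ.filter (fun k : Fin n => ¬ (k:ℕ) < m)
        = Finset.univ.filter (fun k : Fin n => m ≤ (k:ℕ)) := by
      simp [not_lt]
    rw [Matrix.sub_apply, hGspec i j, hXprod i j, ← hfe]
    linarith [hsplit]
  -- squared Frobenius norm of the residual
  have hsum2 : ∑ i, ∑ j, ((G - Xstar * Xstarᵀ) i j)^2
      = ∑ k ∈ Finset.univ.filter (fun k : Fin n => m ≤ (k:ℕ)), (lam k)^2 := by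
    have hentry : ∀ i j, (G - Xstar * Xstarᵀ) i j
        = ∑ k ∈ Finset.univ.filter (fun k : Fin n => m ≤ (k:ℕ)), (lam k * u k i) * u k j := by
      intro i j
      rw [hdiffS i j]
      exact Finset.sum_congr rfl fun k _ => by ring
    calc ∑ i, ∑ j, ((G - Xstar * Xstarᵀ) i j)^2
        = ∑ i, ∑ k ∈ Finset.univ.filter (fun k : Fin n => m ≤ (k:ℕ)), (lam k * u k i)^2 := by
          refine Finset.sum_congr rfl fun i _ => ?_
          calc ∑ j, ((G - Xstar * Xstarᵀ) i j)^2
              = ∑ j, (∑ k ∈ Finset.univ.filter (fun k : Fin n => m ≤ (k:ℕ)),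
                  (lam k * u k i) * u k j)^2 := by
                exact Finset.sum_congr rfl fun j _ => by rw [hentry i j]
            _ = ∑ k ∈ Finset.univ.filter (fun k : Fin n => m ≤ (k:ℕ)), (lam k * u k i)^2 :=
                sq_sum_filter _ u horth' _
      _ = ∑ k ∈ Finset.univ.filter (fun k : Fin n => m ≤ (k:ℕ)), ∑ i, (lam k * u k i)^2 :=
          Finset.sum_comm
      _ = ∑ k ∈ Finset.univ.filter (fun k : Fin n => m ≤ (k:ℕ)), (lam k)^2 := by
          refine Finset.sum_congr rfl fun k _ => ?_
          have : ∑ i, (lam k * u k i)^2 = lam k ^2 * ∑ i, u k i * u k i := by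
            rw [Finset.mul_sum]
            exact Finset.sum_congr rfl fun i _ => by ring
          rw [this, horth' k k, if_pos rfl, mul_one]
  have hnonneg2 : (0:ℝ) ≤ ∑ i, ∑ j, ((G - Xstar * Xstarᵀ) i j)^2 :=
    Finset.sum_nonneg fun i _ => Finset.sum_nonneg fun j _ => sq_nonneg _
  constructor
  · -- optimality
    intro X
    obtain ⟨r, v, hr, hv, hcols⟩ := exists_onb_cols X
    choose cc hcc using hcols
    set c : Fin n → ℝ := fun k => ∑ t, (∑ i, v t i * u k i)^2 with hcdef
    have hc0 : ∀ k, 0 ≤ c k := fun k => Finset.sum_nonneg fun t _ => sq_nonneg _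
    have hc1 : ∀ k, c k ≤ 1 := by
      intro k
      have := bessel v hv (u k)
      have h2 : ∑ i, (u k i)^2 = 1 := by
        have := horth' k k
        rw [if_pos rfl] at this
        rw [← this]
        exact Finset.sum_congr rfl fun i _ => sq (u k i)
      rw [h2] at this
      exact this
    have hcsum : ∑ k, c k = (r : ℝ) := by
      calc ∑ k, c k = ∑ k, ∑ t, (∑ i, v t i * u k i)^2 := rfl
        _ = ∑ t, ∑ k, (∑ i, v t i * u k i)^2 := Finset.sum_comm
        _ = ∑ t : Fin r, (1:ℝ) := by
            refine Finset.sum_congr rfl fun t _ => ?_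
            rw [parseval_aux u hcomp (v t)]
            have := hv t t
            rw [if_pos rfl] at this
            rw [← this]
            exact Finset.sum_congr rfl fun i _ => sq (v t i)
        _ = (r : ℝ) := by simp
    set A := G - X * Xᵀ with hAdef
    have hrot : ∑ i, ∑ j, (A i j)^2 = ∑ k, ∑ i, (∑ j, A i j * u k j)^2 := by
      calc ∑ i, ∑ j, (A i j)^2
          = ∑ i, ∑ k, (∑ j, A i j * u k j)^2 :=
            Finset.sum_congr rfl fun i _ => (parseval_aux u hcomp (fun j => A i j)).symm
        _ = ∑ k, ∑ i, (∑ j, A i j * u k j)^2 := Finset.sum_comm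
    have hAv : ∀ k i, (∑ j, A i j * u k j)
        = lam k * u k i - ∑ j, (X * Xᵀ) i j * u k j := by
      intro k i
      have : ∀ j, A i j * u k j = G i j * u k j - (X * Xᵀ) i j * u k j := by
        intro j
        rw [hAdef, Matrix.sub_apply]
        ring
      rw [Finset.sum_congr rfl fun j _ => this j, Finset.sum_sub_distrib, hGiv k i]
    have hw : ∀ k, ∃ e : Fin r → ℝ, ∀ i, (∑ j, (X * Xᵀ) i j * u k j) = ∑ t, e t * v t i := by
      intro k
      refine ⟨fun t => ∑ p, cc p t * (∑ j, X j p * u k j), fun i => ?_⟩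
      calc ∑ j, (X * Xᵀ) i j * u k j
          = ∑ j, ∑ p, (X i p) * (X j p * u k j) := by
            refine Finset.sum_congr rfl fun j _ => ?_
            rw [Matrix.mul_apply, Finset.sum_mul]
            exact Finset.sum_congr rfl fun p _ => by
              rw [Matrix.transpose_apply]; ring
        _ = ∑ p, ∑ j, (X i p) * (X j p * u k j) := Finset.sum_comm
        _ = ∑ p, X i p * (∑ j, X j p * u k j) :=
            Finset.sum_congr rfl fun p _ => (Finset.mul_sum _ _ _).symm
        _ = ∑ p, (∑ t, cc p t * v t i) * (∑ j, X j p * u k j) :=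
            Finset.sum_congr rfl fun p _ => by rw [← hcc p i]
        _ = ∑ p, ∑ t, (cc p t * (∑ j, X j p * u k j)) * v t i := by
            refine Finset.sum_congr rfl fun p _ => ?_
            rw [Finset.sum_mul]
            exact Finset.sum_congr rfl fun t _ => by ring
        _ = ∑ t, ∑ p, (cc p t * (∑ j, X j p * u k j)) * v t i := Finset.sum_comm
        _ = ∑ t, (∑ p, cc p t * (∑ j, X j p * u k j)) * v t i :=
            Finset.sum_congr rfl fun t _ => (Finset.sum_mul _ _ _).symm
    have hper : ∀ k, lam k ^2 * (1 - c k) ≤ ∑ i, (∑ j, A i j * u k j)^2 := by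
      intro k
      obtain ⟨e, he⟩ := hw k
      have hb := dist_bound v hv (fun i => lam k * u k i) e
      have h1 : ∑ i, (lam k * u k i)^2 = lam k ^2 := by
        have : ∑ i, (lam k * u k i)^2 = lam k ^2 * ∑ i, u k i * u k i := by
          rw [Finset.mul_sum]
          exact Finset.sum_congr rfl fun i _ => by ring
        rw [this, horth' k k, if_pos rfl, mul_one]
      have h2 : ∑ t, (∑ i, v t i * (lam k * u k i))^2 = lam k ^2 * c k := by
        rw [hcdef, Finset.mul_sum]
        refine Finset.sum_congr rfl fun t _ => ?_
        have : ∑ i, v t i * (lam k * u k i) = lam k * ∑ i, v t i * u k i := by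
          rw [Finset.mul_sum]
          exact Finset.sum_congr rfl fun i _ => by ring
        rw [this]
        ring
      rw [h1, h2] at hb
      have h3 : ∑ i, (lam k * u k i - ∑ t, e t * v t i)^2 = ∑ i, (∑ j, A i j * u k j)^2 := by
        refine Finset.sum_congr rfl fun i _ => ?_
        rw [hAv k i, he i]
      calc lam k ^2 * (1 - c k) = lam k ^2 - lam k ^2 * c k := by ring
        _ ≤ ∑ i, (lam k * u k i - ∑ t, e t * v t i)^2 := hb
        _ = ∑ i, (∑ j, A i j * u k j)^2 := h3
    have hknap := knapsack hmn (fun k => lam k ^2) c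
      (fun k l hkl => pow_le_pow_left₀ (hnonneg l) (hdecr k l hkl) 2)
      (fun k => sq_nonneg _) hc0 hc1
      (by rw [hcsum]; exact_mod_cast hr)
    have hchain : ∑ k ∈ Finset.univ.filter (fun k : Fin n => m ≤ (k:ℕ)), (lam k)^2
        ≤ ∑ i, ∑ j, (A i j)^2 := by
      calc ∑ k ∈ Finset.univ.filter (fun k : Fin n => m ≤ (k:ℕ)), (lam k)^2
          ≤ ∑ k, lam k ^2 * (1 - c k) := hknap
        _ ≤ ∑ k, ∑ i, (∑ j, A i j * u k j)^2 := Finset.sum_le_sum fun k _ => hper k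
        _ = ∑ i, ∑ j, (A i j)^2 := hrot.symm
    rw [frobNorm, frobNorm]
    apply Real.sqrt_le_sqrt
    rw [hsum2]
    exact hchain
  · -- optimal value
    rw [frobNorm, Real.sq_sqrt hnonneg2, hsum2]
end
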